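/- Let f : X → X be a continuous map on a metric space (X,d). Then (X,f) is collectively sensitive for the metric d if and only if the hyperextension system (𝒦(X), f̄) is sensitive for the Hausdorff metric d_H. -/

import Mathlib

open Filter Metric TopologicalSpace

/-- The hyperextension of a continuous map `f`, acting on the space `𝒦(X)` of nonempty
compact subsets of `X` (endowed with the Hausdorff metric) by `K ↦ f(K)`. -/
noncomputable def hyperext {X : Type*} [MetricSpace X] (f : X → X) (hf : Continuous f) :
    NonemptyCompacts X → NonemptyCompacts X :=
  fun K => ⟨⟨f '' K, K.isCompact.image hf⟩, K.nonempty.image f⟩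

/-- `(Y,g)` is sensitive (to initial conditions). -/
def Sensitive {Y : Type*} [MetricSpace Y] (g : Y → Y) : Prop :=
  ∃ ε > 0, ∀ y : Y, ∀ δ > 0, ∃ z : Y, ∃ n : ℕ, 1 ≤ n ∧
    dist y z < δ ∧ ε < dist (g^[n] y) (g^[n] z)

/-- `(X,f)` is collectively sensitive. -/
def CollectivelySensitive {X : Type*} [MetricSpace X] (f : X → X) : Prop :=
  ∃ ε > 0, ∀ N : ℕ, 1 ≤ N → ∀ x : Fin N → X, Function.Injective x → ∀ δ > 0,
    ∃ y : Fin N → X, ∃ n : ℕ, 1 ≤ n ∧ (∀ j, dist (x j) (y j) < δ) ∧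
      ∃ j₀ : Fin N, (∀ j, ε < dist (f^[n] (x j₀)) (f^[n] (y j))) ∨
        (∀ j, ε < dist (f^[n] (x j)) (f^[n] (y j₀)))

/-- The carrier of the `n`-th iterate of the hyperextension is the image under `f^[n]`. -/
lemma hyperext_iterate_coe {X : Type*} [MetricSpace X] (f : X → X) (hf : Continuous f)
    (n : ℕ) (K : NonemptyCompacts X) :
    (((hyperext f hf)^[n] K : NonemptyCompacts X) : Set X) = f^[n] '' (K : Set X) := by
  induction n with
  | zero => simp
  | succ n ih =>
      rw [Function.iterate_succ_apply']
      show f '' _ = _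
      rw [ih, ← Set.image_comp, ← Function.iterate_succ']

/-- If a point of `s` is at distance `> ε` from every point of the nonempty set `t`,
then the Hausdorff distance between `s` and `t` is at least `ε`. -/
lemma le_hausdorffDist_of_far {X : Type*} [MetricSpace X] {s t : Set X} {a : X} {ε : ℝ}
    (ha : a ∈ s) (ht : t.Nonempty) (hfin : EMetric.hausdorffEdist s t ≠ ⊤)
    (h : ∀ b ∈ t, ε ≤ dist a b) : ε ≤ Metric.hausdorffDist s t := by
  have h1 : ε ≤ Metric.infDist a t := by
    by_contra hc
    push_neg at hc
    obtain ⟨b, hb, hb'⟩ := (Metric.infDist_lt_iff ht).1 hc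
    exact absurd (h b hb) (not_le.2 hb')
  exact h1.trans (Metric.infDist_le_hausdorffDist_of_mem ha hfin)

/-- `(X,f)` is collectively sensitive for `d` if and only if the hyperextension system
`(𝒦(X), f̄)` is sensitive for the Hausdorff metric `d_H`. -/
theorem collectivelySensitive_iff_sensitive_hyperext {X : Type*} [MetricSpace X]
    (f : X → X) (hf : Continuous f) :
    CollectivelySensitive f ↔ Sensitive (hyperext f hf) := by
  constructor
  · rintro ⟨ε, hε, H⟩
    refine ⟨ε / 3, by linarith, fun K δ hδ => ?_⟩
    -- choose a finite (δ/4)-net of K inside K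
    obtain ⟨t, htK, htfin, htcov⟩ := K.isCompact.finite_cover_balls (e := δ / 4) (by linarith)
    have htne : t.Nonempty := by
      obtain ⟨k, hk⟩ := K.nonempty
      obtain ⟨a, ha⟩ := Set.mem_iUnion₂.1 (htcov hk)
      exact ⟨a, ha.1⟩
    -- enumerate the net injectively
    set s : Finset X := htfin.toFinset with hs
    have hsne : s.Nonempty := by simpa [hs] using htne
    set N : ℕ := s.card with hN
    have hN1 : 1 ≤ N := Finset.card_pos.2 hsne
    set x : Fin N → X := fun i => (s.equivFin.symm i : X) with hx
    have hxinj : Function.Injective x :=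
      Subtype.val_injective.comp s.equivFin.symm.injective
    have hxrange : Set.range x = t := by
      ext a
      simp only [hx, Set.mem_range]
      constructor
      · rintro ⟨i, rfl⟩
        exact (Set.Finite.mem_toFinset htfin).1 (s.equivFin.symm i).2
      · intro ha
        exact ⟨s.equivFin ⟨a, (Set.Finite.mem_toFinset htfin).2 ha⟩, by simp⟩
    have hxmemK : ∀ j, x j ∈ (K : Set X) := by
      intro j
      exact htK (by rw [← hxrange]; exact Set.mem_range_self j)
    -- apply collective sensitivity with δ/4
    obtain ⟨y, n, hn1, hy, j₀, hcase⟩ := H N hN1 x hxinj (δ / 4) (by linarith)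
    -- the net as a nonempty compact set
    have : Nonempty (Fin N) := Fin.pos_iff_nonempty.1 hN1
    set A : NonemptyCompacts X :=
      ⟨⟨Set.range x, (Set.finite_range x).isCompact⟩, Set.range_nonempty x⟩ with hA
    have hKA : dist K A ≤ δ / 4 := by
      rw [NonemptyCompacts.dist_eq]
      apply Metric.hausdorffDist_le_of_mem_dist (by linarith)
      · intro a ha
        obtain ⟨b, hb⟩ := Set.mem_iUnion₂.1 (htcov ha)
        refine ⟨b, ?_, le_of_lt hb.2⟩
        show b ∈ Set.range x
        rw [hxrange]; exact hb.1
      · intro a ha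
        obtain ⟨j, rfl⟩ := ha
        exact ⟨x j, hxmemK j, by simp; positivity⟩
    have hAbd : Bornology.IsBounded (A : Set X) := A.isCompact.isBounded
    -- a generic helper: conclude sensitivity at K from a candidate B
    have key : ∀ B : NonemptyCompacts X, dist A B ≤ δ / 4 →
        ε ≤ dist ((hyperext f hf)^[n] A) ((hyperext f hf)^[n] B) →
        ∃ z : NonemptyCompacts X, ∃ m : ℕ, 1 ≤ m ∧ dist K z < δ ∧
          ε / 3 < dist ((hyperext f hf)^[m] K) ((hyperext f hf)^[m] z) := by
      intro B hAB hfar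
      by_cases h1 : ε / 3 < dist ((hyperext f hf)^[n] K) ((hyperext f hf)^[n] A)
      · exact ⟨A, n, hn1, lt_of_le_of_lt hKA (by linarith), h1⟩
      · push_neg at h1
        refine ⟨B, n, hn1, ?_, ?_⟩
        · calc dist K B ≤ dist K A + dist A B := dist_triangle _ _ _
            _ ≤ δ / 4 + δ / 4 := add_le_add hKA hAB
            _ < δ := by linarith
        · by_contra h2
          push_neg at h2
          have htri : dist ((hyperext f hf)^[n] A) ((hyperext f hf)^[n] B) ≤
              dist ((hyperext f hf)^[n] K) ((hyperext f hf)^[n] A) +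
              dist ((hyperext f hf)^[n] K) ((hyperext f hf)^[n] B) := by
            rw [dist_comm ((hyperext f hf)^[n] K) ((hyperext f hf)^[n] A)]
            exact dist_triangle _ _ _
          linarith
    rcases hcase with hc | hc
    · -- B = range y
      set B : NonemptyCompacts X :=
        ⟨⟨Set.range y, (Set.finite_range y).isCompact⟩, Set.range_nonempty y⟩ with hB
      refine key B ?_ ?_
      · rw [NonemptyCompacts.dist_eq]
        apply Metric.hausdorffDist_le_of_mem_dist (by linarith)
        · rintro a ⟨j, rfl⟩
          exact ⟨y j, Set.mem_range_self j, le_of_lt (hy j)⟩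
        · rintro a ⟨j, rfl⟩
          exact ⟨x j, Set.mem_range_self j, by rw [dist_comm]; exact le_of_lt (hy j)⟩
      · rw [NonemptyCompacts.dist_eq, hyperext_iterate_coe, hyperext_iterate_coe]
        have hAn : (f^[n] '' (A : Set X)).Nonempty := (Set.range_nonempty x).image _
        have hBn : (f^[n] '' (B : Set X)).Nonempty := (Set.range_nonempty y).image _
        have hfin : EMetric.hausdorffEdist (f^[n] '' (A : Set X)) (f^[n] '' (B : Set X)) ≠ ⊤ :=
          Metric.hausdorffEdist_ne_top_of_nonempty_of_bounded hAn hBn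
            (((Set.finite_range x).image _).isBounded)
            (((Set.finite_range y).image _).isBounded)
        refine le_hausdorffDist_of_far (a := f^[n] (x j₀)) ?_ hBn hfin ?_
        · exact Set.mem_image_of_mem _ (Set.mem_range_self j₀)
        · rintro b ⟨w, ⟨j, rfl⟩, rfl⟩
          exact le_of_lt (hc j)
    · -- B = insert (y j₀) (range x)
      set B : NonemptyCompacts X :=
        ⟨⟨insert (y j₀) (Set.range x), ((Set.finite_range x).insert _).isCompact⟩,
          Set.insert_nonempty _ _⟩ with hB
      refine key B ?_ ?_
      · rw [NonemptyCompacts.dist_eq]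
        apply Metric.hausdorffDist_le_of_mem_dist (by linarith)
        · rintro a ⟨j, rfl⟩
          exact ⟨x j, Set.mem_insert_of_mem _ (Set.mem_range_self j), by simp; linarith⟩
        · rintro a (rfl | ⟨j, rfl⟩)
          · exact ⟨x j₀, Set.mem_range_self j₀, by rw [dist_comm]; exact le_of_lt (hy j₀)⟩
          · exact ⟨x j, Set.mem_range_self j, by simp; linarith⟩
      · rw [NonemptyCompacts.dist_eq, hyperext_iterate_coe, hyperext_iterate_coe]
        have hAn : (f^[n] '' (A : Set X)).Nonempty := (Set.range_nonempty x).image _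
        have hBn : (f^[n] '' (B : Set X)).Nonempty := B.nonempty.image _
        have hfin : EMetric.hausdorffEdist (f^[n] '' (B : Set X)) (f^[n] '' (A : Set X)) ≠ ⊤ :=
          Metric.hausdorffEdist_ne_top_of_nonempty_of_bounded hBn hAn
            ((((Set.finite_range x).insert _).image _).isBounded)
            (((Set.finite_range x).image _).isBounded)
        rw [Metric.hausdorffDist_comm]
        refine le_hausdorffDist_of_far (a := f^[n] (y j₀)) ?_ hAn hfin ?_
        · exact Set.mem_image_of_mem _ (Set.mem_insert _ _)
        · rintro b ⟨w, ⟨j, rfl⟩, rfl⟩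
          rw [dist_comm]
          exact le_of_lt (hc j)
  · rintro ⟨ε, hε, H⟩
    refine ⟨ε, hε, fun N hN1 x hxinj δ hδ => ?_⟩
    have : Nonempty (Fin N) := Fin.pos_iff_nonempty.1 hN1
    set K : NonemptyCompacts X :=
      ⟨⟨Set.range x, (Set.finite_range x).isCompact⟩, Set.range_nonempty x⟩ with hK
    obtain ⟨L, n, hn1, hKL, hfar⟩ := H K δ hδ
    rw [NonemptyCompacts.dist_eq] at hKL
    rw [NonemptyCompacts.dist_eq, hyperext_iterate_coe, hyperext_iterate_coe] at hfar
    have hKnne : ((K : Set X)).Nonempty := K.nonempty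
    have hLnne : ((L : Set X)).Nonempty := L.nonempty
    have hedKL : EMetric.hausdorffEdist (K : Set X) (L : Set X) ≠ ⊤ :=
      Metric.hausdorffEdist_ne_top_of_nonempty_of_bounded hKnne hLnne
        K.isCompact.isBounded L.isCompact.isBounded
    have hedn : EMetric.hausdorffEdist (f^[n] '' (K : Set X)) (f^[n] '' (L : Set X)) ≠ ⊤ :=
      Metric.hausdorffEdist_ne_top_of_nonempty_of_bounded (hKnne.image _) (hLnne.image _)
        ((Set.finite_range x).image _).isBounded (L.isCompact.image (hf.iterate n)).isBounded
    -- from d_H > ε extract a far point on one of the two sides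
    have hcases : (∃ a ∈ f^[n] '' (K : Set X), ε < Metric.infDist a (f^[n] '' (L : Set X))) ∨
        (∃ b ∈ f^[n] '' (L : Set X), ε < Metric.infDist b (f^[n] '' (K : Set X))) := by
      by_contra hc
      push_neg at hc
      have := Metric.hausdorffDist_le_of_infDist (le_of_lt hε) hc.1 hc.2
      linarith
    rcases hcases with ⟨a, ⟨p, hp, rfl⟩, ha⟩ | ⟨b, ⟨q, hq, rfl⟩, hb⟩
    · -- a point of K whose image is far from fⁿ(L): move every point into L
      obtain ⟨j₀, hj₀⟩ : ∃ j₀, p = x j₀ := by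
        obtain ⟨j, hj⟩ := hp
        exact ⟨j, hj.symm⟩
      have hchoice : ∀ j, ∃ z ∈ (L : Set X), dist (x j) z < δ := by
        intro j
        have h1 : Metric.infDist (x j) (L : Set X) < δ :=
          lt_of_le_of_lt (Metric.infDist_le_hausdorffDist_of_mem (Set.mem_range_self j) hedKL)
            hKL
        exact (Metric.infDist_lt_iff hLnne).1 h1
      choose y hyL hyd using hchoice
      refine ⟨y, n, hn1, hyd, j₀, Or.inl fun j => ?_⟩
      rw [hj₀] at ha
      calc ε < Metric.infDist (f^[n] (x j₀)) (f^[n] '' (L : Set X)) := ha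
        _ ≤ dist (f^[n] (x j₀)) (f^[n] (y j)) :=
          Metric.infDist_le_dist_of_mem (Set.mem_image_of_mem _ (hyL j))
    · -- a point of L whose image is far from fⁿ(K): move one point of K to it
      have h1 : Metric.infDist q (K : Set X) < δ := by
        have := Metric.infDist_le_hausdorffDist_of_mem hq
          (by rw [EMetric.hausdorffEdist_comm]; exact hedKL)
        rw [Metric.hausdorffDist_comm] at hKL
        exact lt_of_le_of_lt this hKL
      obtain ⟨p, hp, hpq⟩ := (Metric.infDist_lt_iff hKnne).1 h1
      obtain ⟨j₀, rfl⟩ := hp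
      refine ⟨Function.update x j₀ q, n, hn1, ?_, j₀, Or.inr fun j => ?_⟩
      · intro j
        rcases eq_or_ne j j₀ with rfl | hne
        · rw [Function.update_self, dist_comm]; exact hpq
        · rw [Function.update_of_ne hne]; simpa using hδ
      · rw [Function.update_self]
        calc ε < Metric.infDist (f^[n] q) (f^[n] '' (K : Set X)) := hb
          _ ≤ dist (f^[n] q) (f^[n] (x j)) :=
            Metric.infDist_le_dist_of_mem (Set.mem_image_of_mem _ (Set.mem_range_self j))
          _ = dist (f^[n] (x j)) (f^[n] q) := dist_comm _ _
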